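/- Let K_1 ⊇ K_2 ⊇ ⋯ be nested compact convex subsets of the unit ball with α_i := D_p(K_i, K_{i+1}) nonincreasing in i and α_i ≤ 2ε for all i, and let 0 < η < (1−ε)/(2ε). Suppose each K_i contains the ball B(0, 1−ε). Define s̄(K_i) = (−1)^{i+1}·η·α_i·e_1. Then s̄ is a partial selector (s̄(K_i) ∈ K_i for all i) and is 2η-Lipschitz with respect to D_p: for all i, j, ‖s̄(K_i) − s̄(K_j)‖ ≤ 2η·D_p(K_i, K_j). Moreover Σ_i ‖s̄(K_i) − s̄(K_{i+1})‖ ≥ η·Σ_i α_i. -/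

import Mathlib

open MeasureTheory Real Set
open scoped RealInnerProductSpace

noncomputable section

/-- The normalized uniform (surface) measure on the unit sphere in `ℝ^d`. -/
def sphereMeasure (d : ℕ) : Measure (Metric.sphere (0 : EuclideanSpace ℝ (Fin d)) 1) :=
  ((volume : Measure (EuclideanSpace ℝ (Fin d))).toSphere Set.univ)⁻¹ •
    (volume : Measure (EuclideanSpace ℝ (Fin d))).toSphere

/-- The support function of a set `K ⊆ ℝ^d`. -/
def suppFn {d : ℕ} (K : Set (EuclideanSpace ℝ (Fin d))) (y : EuclideanSpace ℝ (Fin d)) : ℝ :=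
  sSup ((fun x => ⟪x, y⟫) '' K)

/-- The `L_p` analog of the Hausdorff distance: the `L_p`-distance of support functions
with respect to the normalized uniform measure on the sphere. -/
def Dp {d : ℕ} (p : ℝ) (K K' : Set (EuclideanSpace ℝ (Fin d))) : ℝ :=
  (∫ y : Metric.sphere (0 : EuclideanSpace ℝ (Fin d)) 1,
      |suppFn K (y : EuclideanSpace ℝ (Fin d)) - suppFn K' (y : EuclideanSpace ℝ (Fin d))| ^ p
    ∂ sphereMeasure d) ^ (1 / p)

/-- The open spherical cap of angular radius `θ` around `v`, as a subset of `ℝ^d`. -/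
def cap {d : ℕ} (v : EuclideanSpace ℝ (Fin d)) (θ : ℝ) : Set (EuclideanSpace ℝ (Fin d)) :=
  {x | ‖x‖ = 1 ∧ Real.arccos ⟪x, v⟫ < θ}

/-- The open spherical cap, as a subset of the unit sphere (for measuring). -/
def capS {d : ℕ} (v : EuclideanSpace ℝ (Fin d)) (θ : ℝ) :
    Set (Metric.sphere (0 : EuclideanSpace ℝ (Fin d)) 1) :=
  {x | Real.arccos ⟪(x : EuclideanSpace ℝ (Fin d)), v⟫ < θ}

/-- The Steiner point of a set `K ⊆ ℝ^d`. -/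
def steiner {d : ℕ} (K : Set (EuclideanSpace ℝ (Fin d))) : EuclideanSpace ℝ (Fin d) :=
  (d : ℝ) • ∫ y : Metric.sphere (0 : EuclideanSpace ℝ (Fin d)) 1,
      suppFn K (y : EuclideanSpace ℝ (Fin d)) • (y : EuclideanSpace ℝ (Fin d)) ∂ sphereMeasure d

instance sphereMeasure_finite (d : ℕ) : IsFiniteMeasure (sphereMeasure d) := by
  constructor
  rw [sphereMeasure, Measure.smul_apply, smul_eq_mul]
  exact lt_of_le_of_lt (ENNReal.inv_mul_le_one _) ENNReal.one_lt_top

variable {d : ℕ}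

lemma bddAbove_inner (K : Set (EuclideanSpace ℝ (Fin d))) (hK : K ⊆ Metric.closedBall 0 1)
    (y : EuclideanSpace ℝ (Fin d)) : BddAbove ((fun x => ⟪x, y⟫) '' K) := by
  refine ⟨‖y‖, ?_⟩
  rintro _ ⟨x, hx, rfl⟩
  calc ⟪x, y⟫ ≤ ‖x‖ * ‖y‖ := real_inner_le_norm _ _
    _ ≤ 1 * ‖y‖ := by
        have := mem_closedBall_zero_iff.mp (hK hx)
        exact mul_le_mul_of_nonneg_right this (norm_nonneg _)
    _ = ‖y‖ := one_mul _

lemma le_suppFn {K : Set (EuclideanSpace ℝ (Fin d))} (hK : K ⊆ Metric.closedBall 0 1)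
    {x y : EuclideanSpace ℝ (Fin d)} (hx : x ∈ K) : ⟪x, y⟫ ≤ suppFn K y :=
  le_csSup (bddAbove_inner K hK y) ⟨x, hx, rfl⟩

lemma suppFn_nonneg {K : Set (EuclideanSpace ℝ (Fin d))} (hK : K ⊆ Metric.closedBall 0 1)
    (h0 : (0 : EuclideanSpace ℝ (Fin d)) ∈ K) (y : EuclideanSpace ℝ (Fin d)) :
    0 ≤ suppFn K y := by
  have := le_suppFn hK h0 (y := y)
  simpa using this

lemma suppFn_le_one {K : Set (EuclideanSpace ℝ (Fin d))} (hK : K ⊆ Metric.closedBall 0 1)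
    (hne : K.Nonempty) {y : EuclideanSpace ℝ (Fin d)} (hy : ‖y‖ = 1) :
    suppFn K y ≤ 1 := by
  apply csSup_le (hne.image _)
  rintro _ ⟨x, hx, rfl⟩
  calc ⟪x, y⟫ ≤ ‖x‖ * ‖y‖ := real_inner_le_norm _ _
    _ ≤ 1 * 1 := by
        have := mem_closedBall_zero_iff.mp (hK hx)
        rw [hy]; exact mul_le_mul_of_nonneg_right this (by norm_num)
    _ = 1 := one_mul _

lemma suppFn_mono {K K' : Set (EuclideanSpace ℝ (Fin d))} (hK : K ⊆ Metric.closedBall 0 1)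
    (hKK : K' ⊆ K) (hne : K'.Nonempty) (y : EuclideanSpace ℝ (Fin d)) :
    suppFn K' y ≤ suppFn K y :=
  csSup_le_csSup (bddAbove_inner K hK y) (hne.image _) (Set.image_mono hKK)

lemma suppFn_lipschitz (K : Set (EuclideanSpace ℝ (Fin d))) (hK : K ⊆ Metric.closedBall 0 1)
    (hne : K.Nonempty) : LipschitzWith 1 (suppFn K) := by
  have key : ∀ y y' : EuclideanSpace ℝ (Fin d), suppFn K y ≤ suppFn K y' + ‖y - y'‖ := by
    intro y y'
    apply csSup_le (hne.image _)
    rintro _ ⟨x, hx, rfl⟩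
    have h1 : ⟪x, y⟫ = ⟪x, y'⟫ + ⟪x, y - y'⟫ := by rw [inner_sub_right]; ring
    have h2 : ⟪x, y'⟫ ≤ suppFn K y' := le_suppFn hK hx
    have h3 : ⟪x, y - y'⟫ ≤ ‖y - y'‖ := by
      calc ⟪x, y - y'⟫ ≤ ‖x‖ * ‖y - y'‖ := real_inner_le_norm _ _
        _ ≤ 1 * ‖y - y'‖ := mul_le_mul_of_nonneg_right
            (mem_closedBall_zero_iff.mp (hK hx)) (norm_nonneg _)
        _ = ‖y - y'‖ := one_mul _
    linarith
  apply LipschitzWith.of_dist_le_mul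
  intro y y'
  rw [NNReal.coe_one, one_mul, Real.dist_eq, dist_eq_norm, abs_sub_le_iff]
  constructor
  · have := key y y'; linarith
  · have := key y' y; rw [norm_sub_rev] at this; linarith

lemma integrable_aux (p : ℝ) (hp : 1 ≤ p) {K K' : Set (EuclideanSpace ℝ (Fin d))}
    (hK : K ⊆ Metric.closedBall 0 1) (hK' : K' ⊆ Metric.closedBall 0 1)
    (h0 : (0 : EuclideanSpace ℝ (Fin d)) ∈ K) (h0' : (0 : EuclideanSpace ℝ (Fin d)) ∈ K') :
    Integrable (fun y : Metric.sphere (0 : EuclideanSpace ℝ (Fin d)) 1 =>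
      |suppFn K (y : EuclideanSpace ℝ (Fin d)) - suppFn K' (y : EuclideanSpace ℝ (Fin d))| ^ p)
      (sphereMeasure d) := by
  have hc : Continuous fun y : Metric.sphere (0 : EuclideanSpace ℝ (Fin d)) 1 =>
      |suppFn K (y : EuclideanSpace ℝ (Fin d)) - suppFn K' (y : EuclideanSpace ℝ (Fin d))| ^ p := by
    apply Continuous.rpow_const
    · exact ((((suppFn_lipschitz K hK ⟨0, h0⟩).continuous.sub
        (suppFn_lipschitz K' hK' ⟨0, h0'⟩).continuous).abs).comp continuous_subtype_val)
    · intro x; right; linarith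
  apply Integrable.mono' (integrable_const ((2 : ℝ) ^ p)) hc.aestronglyMeasurable
  filter_upwards with y
  rw [Real.norm_eq_abs, abs_of_nonneg (Real.rpow_nonneg (abs_nonneg _) _)]
  apply Real.rpow_le_rpow (abs_nonneg _) ?_ (by linarith)
  have hy : ‖(y : EuclideanSpace ℝ (Fin d))‖ = 1 := mem_sphere_zero_iff_norm.mp y.2
  have b1 := suppFn_le_one hK ⟨0, h0⟩ hy
  have b2 := suppFn_le_one hK' ⟨0, h0'⟩ hy
  have b3 := suppFn_nonneg hK h0 (y : EuclideanSpace ℝ (Fin d))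
  have b4 := suppFn_nonneg hK' h0' (y : EuclideanSpace ℝ (Fin d))
  rw [abs_le]; constructor <;> linarith

lemma Dp_nonneg (p : ℝ) (K K' : Set (EuclideanSpace ℝ (Fin d))) : 0 ≤ Dp p K K' :=
  Real.rpow_nonneg (integral_nonneg fun _ => Real.rpow_nonneg (abs_nonneg _) _) _

lemma Dp_symm (p : ℝ) (K K' : Set (EuclideanSpace ℝ (Fin d))) : Dp p K K' = Dp p K' K := by
  unfold Dp
  congr 1
  apply integral_congr_ae
  filter_upwards with y
  rw [abs_sub_comm]

lemma Dp_le_Dp (p : ℝ) (hp : 1 ≤ p) {A B C : Set (EuclideanSpace ℝ (Fin d))}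
    (hA : A ⊆ Metric.closedBall 0 1) (hB : B ⊆ A) (hC : C ⊆ B)
    (h0 : (0 : EuclideanSpace ℝ (Fin d)) ∈ C) : Dp p A B ≤ Dp p A C := by
  have h0B : (0 : EuclideanSpace ℝ (Fin d)) ∈ B := hC h0
  have h0A : (0 : EuclideanSpace ℝ (Fin d)) ∈ A := hB h0B
  have hBsub : B ⊆ Metric.closedBall 0 1 := fun x hx => hA (hB hx)
  have hCsub : C ⊆ Metric.closedBall 0 1 := fun x hx => hBsub (hC hx)
  apply Real.rpow_le_rpow (integral_nonneg fun _ => Real.rpow_nonneg (abs_nonneg _) _) ?_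
    (by positivity)
  apply integral_mono_of_nonneg
  · filter_upwards with y using Real.rpow_nonneg (abs_nonneg _) _
  · exact integrable_aux p hp hA hCsub h0A h0
  · filter_upwards with y
    apply Real.rpow_le_rpow (abs_nonneg _) ?_ (by linarith)
    have h1 : suppFn C (y : EuclideanSpace ℝ (Fin d)) ≤ suppFn B (y : EuclideanSpace ℝ (Fin d)) :=
      suppFn_mono hBsub hC ⟨0, h0⟩ _
    have h2 : suppFn B (y : EuclideanSpace ℝ (Fin d)) ≤ suppFn A (y : EuclideanSpace ℝ (Fin d)) :=
      suppFn_mono hA hB ⟨0, h0B⟩ _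
    rw [abs_of_nonneg (by linarith), abs_of_nonneg (by linarith)]
    linarith

/-- The alternating partial selector `s̄(Kᵢ) = (-1)^(i+1)·η·αᵢ·e₁` on a nested sequence of
compact convex sets (indexed here from `0`, so the sign is `(-1)^i`) with
`αᵢ = D_p(Kᵢ,Kᵢ₊₁)` nonincreasing and `αᵢ ≤ 2ε`, each `Kᵢ` containing `B(0,1-ε)`, and
`0 < η < (1-ε)/(2ε)`, is a partial selector, is `2η`-Lipschitz with respect to `D_p`,
and its total movement is at least `η·Σᵢ αᵢ`. -/
theorem partial_selector_properties (p : ℝ) (hp : 1 ≤ p) (d : ℕ) (hd : 0 < d)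
    (K : ℕ → Set (EuclideanSpace ℝ (Fin d)))
    (hK : ∀ i, IsCompact (K i) ∧ Convex ℝ (K i))
    (hnest : ∀ i, K (i + 1) ⊆ K i)
    (hsub : ∀ i, K i ⊆ Metric.closedBall 0 1)
    (ε η : ℝ) (hε : 0 < ε) (hη : 0 < η) (hηε : η < (1 - ε) / (2 * ε))
    (hball : ∀ i, Metric.closedBall (0 : EuclideanSpace ℝ (Fin d)) (1 - ε) ⊆ K i)
    (hα : ∀ i, Dp p (K i) (K (i + 1)) ≤ 2 * ε)
    (hαmono : Antitone (fun i => Dp p (K i) (K (i + 1))))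
    (s : ℕ → EuclideanSpace ℝ (Fin d))
    (hs : ∀ i, s i = ((-1 : ℝ) ^ i * (η * Dp p (K i) (K (i + 1)))) •
      EuclideanSpace.single (⟨0, hd⟩ : Fin d) (1 : ℝ)) :
    (∀ i, s i ∈ K i) ∧
      (∀ i j, ‖s i - s j‖ ≤ 2 * η * Dp p (K i) (K j)) ∧
      (∀ n, η * ∑ i ∈ Finset.range n, Dp p (K i) (K (i + 1)) ≤
        ∑ i ∈ Finset.range n, ‖s i - s (i + 1)‖) := by
  set α : ℕ → ℝ := fun i => Dp p (K i) (K (i + 1)) with hαdef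
  have h1ε : 0 < 1 - ε := by
    have h2 : 0 < (1 - ε) / (2 * ε) := hη.trans hηε
    by_contra h
    push_neg at h
    have : (1 - ε) / (2 * ε) ≤ 0 := div_nonpos_of_nonpos_of_nonneg h (by linarith)
    linarith
  have h0K : ∀ i, (0 : EuclideanSpace ℝ (Fin d)) ∈ K i := fun i =>
    hball i (Metric.mem_closedBall_self (by linarith))
  have hα0 : ∀ i, 0 ≤ α i := fun i => Dp_nonneg p _ _
  have hchain : ∀ i j, i ≤ j → K j ⊆ K i := by
    intro i j hij
    induction j, hij using Nat.le_induction with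
    | base => exact le_refl _
    | succ n hn ih => exact (hnest n).trans ih
  have hnorm : ∀ i j, ‖s i - s j‖ =
      |(-1 : ℝ) ^ i * (η * α i) - (-1 : ℝ) ^ j * (η * α j)| := by
    intro i j
    rw [hs i, hs j, ← sub_smul, norm_smul, EuclideanSpace.norm_single, norm_one, mul_one,
      Real.norm_eq_abs]
  have habs : ∀ i, |(-1 : ℝ) ^ i * (η * α i)| = η * α i := by
    intro i
    rw [abs_mul, abs_pow, abs_neg, abs_one, one_pow, one_mul,
      abs_of_nonneg (mul_nonneg hη.le (hα0 i))]
  have hηε' : η * (2 * ε) < 1 - ε := (lt_div_iff₀ (by linarith)).mp hηε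
  refine ⟨?_, ?_, ?_⟩
  · intro i
    apply hball i
    rw [Metric.mem_closedBall, dist_zero_right, hs i, norm_smul,
      EuclideanSpace.norm_single, norm_one, mul_one, Real.norm_eq_abs, habs i]
    have : η * α i ≤ η * (2 * ε) := mul_le_mul_of_nonneg_left (hα i) hη.le
    linarith
  · have key : ∀ i j, i < j → ‖s i - s j‖ ≤ 2 * η * Dp p (K i) (K j) := by
      intro i j hij
      have hαij : α i ≤ Dp p (K i) (K j) :=
        Dp_le_Dp p hp (hsub i) (hnest i) (hchain (i + 1) j hij) (h0K j)
      have hmono : α j ≤ α i := hαmono hij.le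
      calc ‖s i - s j‖ ≤ |(-1 : ℝ) ^ i * (η * α i)| + |(-1 : ℝ) ^ j * (η * α j)| := by
            rw [hnorm i j]; exact abs_sub _ _
        _ = η * α i + η * α j := by rw [habs i, habs j]
        _ ≤ 2 * (η * α i) := by nlinarith
        _ ≤ 2 * η * Dp p (K i) (K j) := by nlinarith
    intro i j
    rcases lt_trichotomy i j with h | h | h
    · exact key i j h
    · subst h
      simp only [sub_self, norm_zero]
      exact mul_nonneg (by linarith) (Dp_nonneg p _ _)
    · rw [norm_sub_rev, Dp_symm]
      exact key j i h
  · intro n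
    rw [Finset.mul_sum]
    apply Finset.sum_le_sum
    intro i _
    rw [hnorm i (i + 1)]
    have hexp : (-1 : ℝ) ^ i * (η * α i) - (-1 : ℝ) ^ (i + 1) * (η * α (i + 1)) =
        (-1 : ℝ) ^ i * (η * α i + η * α (i + 1)) := by
      rw [pow_succ]; ring
    rw [hexp, abs_mul, abs_pow, abs_neg, abs_one, one_pow, one_mul,
      abs_of_nonneg (show (0:ℝ) ≤ η * α i + η * α (i + 1) by
        have h1 := mul_nonneg hη.le (hα0 i)
        have h2 := mul_nonneg hη.le (hα0 (i + 1))
        linarith)]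
    have := mul_nonneg hη.le (hα0 (i + 1))
    linarith
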